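/- arXiv:1505.03829 — 2 statements merged into one kernel-verified Lean document; each statement's English description precedes it below -/
import Mathlib

section
/- Let A → B be a homomorphism of commutative rings. Let M be a module over the formal power series ring A[[t]] such that tᵏ·M = 0 for some integer k ≥ 0 and such that there exists a short exact sequence 0 → P → Q → M → 0 of A[[t]]-modules with P and Q finitely generated projective A[[t]]-modules. Then Tor₁^{A[[t]]}(M, B[[t]]) = 0, where B[[t]] is regarded as an A[[t]]-module via the coefficientwise ring homomorphism A[[t]] → B[[t]]. -/
noncomputable section

open CategoryTheory

section Aux

variable {R : Type} [CommRing R]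
variable {P Q M N : Type} [AddCommGroup P] [AddCommGroup Q] [AddCommGroup M] [AddCommGroup N]
  [Module R P] [Module R Q] [Module R M] [Module R N]

/-- If `P` is projective and `r` acts injectively on `N`, then `r` acts injectively
on `P ⊗ N`. -/
lemma aux_torsionfree [Module.Projective R P] (r : R)
    (hN : ∀ n : N, r • n = 0 → n = 0) :
    ∀ x : TensorProduct R P N, r • x = 0 → x = 0 := by
  classical
  obtain ⟨s, hs⟩ := Module.projective_def'.mp (inferInstance : Module.Projective R P)
  intro x hx
  have hinv : ∀ a : TensorProduct R P N,
      ((Finsupp.linearCombination R (id : P → P)).rTensor N) (s.rTensor N a) = a := by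
    intro a
    rw [← LinearMap.comp_apply, ← LinearMap.rTensor_comp, hs, LinearMap.rTensor_id,
      LinearMap.id_apply]
  set e := TensorProduct.finsuppScalarLeft R N P with he
  set y := e (s.rTensor N x) with hy
  have hy0 : y = 0 := by
    have h1 : r • y = 0 := by
      rw [hy, ← map_smul, ← map_smul, hx, map_zero, map_zero]
    ext i
    have h2 : r • y i = 0 := by
      have := congrFun (congrArg DFunLike.coe h1) i
      simpa [Finsupp.smul_apply] using this
    simpa using hN (y i) h2
  have h3 : s.rTensor N x = 0 := by
    apply e.injective
    rw [← hy, hy0, map_zero]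
  have := hinv x
  rw [h3, map_zero] at this
  exact this.symm

/-- Key injectivity: if `M` is killed by `r`, `N` has no `r`-torsion, and
`0 → P → Q → M → 0` with `P` projective, then `P ⊗ N → Q ⊗ N` is injective. -/
lemma aux_injA [Module.Projective R P] (g : P →ₗ[R] Q) (π : Q →ₗ[R] M)
    (hg : Function.Injective g) (hexact : Function.Exact g π)
    (r : R) (hM : ∀ m : M, r • m = 0) (hN : ∀ n : N, r • n = 0 → n = 0) :
    Function.Injective (g.rTensor N) := by
  have hker : ∀ q : Q, r • q ∈ LinearMap.range g := by
    intro q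
    have h1 : π (r • q) = 0 := by rw [map_smul]; exact hM _
    obtain ⟨p, hp⟩ := (hexact (r • q)).mp h1
    exact ⟨p, hp⟩
  set e : P ≃ₗ[R] LinearMap.range g := LinearEquiv.ofInjective g hg with he
  have key : ∀ z : LinearMap.range g, g (e.symm z) = (z : Q) := fun z =>
    LinearEquiv.ofInjective_symm_apply (f := g) (h := hg) z
  set h : Q →ₗ[R] P :=
    e.symm.toLinearMap ∘ₗ LinearMap.codRestrict (LinearMap.range g)
      (r • (LinearMap.id : Q →ₗ[R] Q)) (fun q => hker q) with hh
  have hgh : ∀ q : Q, g (h q) = r • q := by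
    intro q
    have : h q = e.symm ⟨r • q, hker q⟩ := rfl
    rw [this, key]
  have hhg : h ∘ₗ g = r • (LinearMap.id : P →ₗ[R] P) := by
    ext p
    apply hg
    rw [LinearMap.comp_apply, hgh, LinearMap.smul_apply, LinearMap.id_apply, map_smul]
  rw [← LinearMap.ker_eq_bot, LinearMap.ker_eq_bot']
  intro x hx
  have h1 : (h ∘ₗ g).rTensor N x = 0 := by
    rw [LinearMap.rTensor_comp, LinearMap.comp_apply, hx, map_zero]
  rw [hhg, LinearMap.rTensor_smul, LinearMap.rTensor_id, LinearMap.smul_apply,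
    LinearMap.id_apply] at h1
  exact aux_torsionfree r hN x h1

/-- Diagram chase: given `0 → P → Q → M → 0` with `Q` flat, and
`0 → K → R₀ → N → 0` with `R₀` flat, if `P ⊗ N → Q ⊗ N` is injective then
`M ⊗ K → M ⊗ R₀` is injective. -/
lemma aux_injB {K R₀ : Type} [AddCommGroup K] [AddCommGroup R₀] [Module R K] [Module R R₀]
    [Module.Flat R Q] [Module.Flat R R₀]
    (g : P →ₗ[R] Q) (π : Q →ₗ[R] M)
    (hgπ : Function.Exact g π) (hπ : Function.Surjective π)
    (ι : K →ₗ[R] R₀) (ρ : R₀ →ₗ[R] N) (hι : Function.Injective ι)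
    (hιρ : Function.Exact ι ρ) (hρ : Function.Surjective ρ)
    (hA : Function.Injective (g.rTensor N)) :
    Function.Injective (ι.lTensor M) := by
  rw [← LinearMap.ker_eq_bot, LinearMap.ker_eq_bot']
  intro x hx
  obtain ⟨y, hy⟩ := LinearMap.rTensor_surjective K (g := π) hπ x
  set y' := ι.lTensor Q y with hy'
  have hcomm1 : π.rTensor R₀ (ι.lTensor Q y) = ι.lTensor M (π.rTensor K y) := by
    rw [← LinearMap.comp_apply, ← LinearMap.comp_apply,
      LinearMap.rTensor_comp_lTensor, LinearMap.lTensor_comp_rTensor]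
  have hy'0 : π.rTensor R₀ y' = 0 := by
    rw [hy', hcomm1, hy, hx]
  obtain ⟨z, hz⟩ := (rTensor_exact R₀ hgπ hπ y').mp hy'0
  have hcomm2 : g.rTensor N (ρ.lTensor P z) = ρ.lTensor Q (g.rTensor R₀ z) := by
    rw [← LinearMap.comp_apply, ← LinearMap.comp_apply,
      LinearMap.rTensor_comp_lTensor, LinearMap.lTensor_comp_rTensor]
  have hρι : ρ ∘ₗ ι = 0 := by
    ext k
    exact (hιρ (ι k)).mpr ⟨k, rfl⟩
  have hz1 : g.rTensor N (ρ.lTensor P z) = 0 := by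
    rw [hcomm2, hz, hy', ← LinearMap.comp_apply, ← LinearMap.lTensor_comp, hρι,
      LinearMap.lTensor_zero, LinearMap.zero_apply]
  have hz0 : ρ.lTensor P z = 0 := by
    apply hA
    rw [hz1, map_zero]
  obtain ⟨w, hw⟩ := (lTensor_exact P hιρ hρ z).mp hz0
  have hcomm3 : ι.lTensor Q (g.rTensor K w) = g.rTensor R₀ (ι.lTensor P w) := by
    rw [← LinearMap.comp_apply, ← LinearMap.comp_apply,
      LinearMap.lTensor_comp_rTensor, LinearMap.rTensor_comp_lTensor]
  have hsub : ι.lTensor Q (y - g.rTensor K w) = 0 := by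
    rw [map_sub, hcomm3, hw, hz, ← hy', sub_self]
  have hyg : y = g.rTensor K w := by
    have hinjQ : Function.Injective (ι.lTensor Q) :=
      Module.Flat.lTensor_preserves_injective_linearMap (M := Q) ι hι
    have h0 : ι.lTensor Q (y - g.rTensor K w) = ι.lTensor Q 0 := by
      rw [hsub, map_zero]
    exact sub_eq_zero.mp (hinjQ h0)
  have hπg : π ∘ₗ g = 0 := by
    ext p
    exact (hgπ (g p)).mpr ⟨p, rfl⟩
  rw [← hy, hyg, ← LinearMap.comp_apply, ← LinearMap.rTensor_comp, hπg,
    LinearMap.rTensor_zero, LinearMap.zero_apply]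

end Aux

/-- Let `A → B` be a homomorphism of commutative rings and let `M`
be an `A[[t]]`-module annihilated by a power of `t` and admitting a length-one
resolution by finitely generated projective `A[[t]]`-modules. Then
`Tor₁^{A[[t]]}(M, B[[t]]) = 0`, where `B[[t]]` is an `A[[t]]`-module via the
coefficientwise homomorphism `A[[t]] → B[[t]]`. -/
theorem statement16 (A B : Type) [CommRing A] [CommRing B] (f : A →+* B)
    (M : Type) [AddCommGroup M] [Module (PowerSeries A) M]
    (hM : ∃ k : ℕ, ∀ x : M, (PowerSeries.X ^ k : PowerSeries A) • x = 0)
    (hres : ∃ (P Q : ModuleCat (PowerSeries A)) (g : P ⟶ Q)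
        (π : Q ⟶ ModuleCat.of (PowerSeries A) M),
      Module.Finite (PowerSeries A) P ∧ Module.Projective (PowerSeries A) P ∧
      Module.Finite (PowerSeries A) Q ∧ Module.Projective (PowerSeries A) Q ∧
      Function.Injective g ∧ Function.Surjective π ∧ Function.Exact g π) :
    letI : Module (PowerSeries A) (PowerSeries B) :=
      Module.compHom (PowerSeries B) (PowerSeries.map f)
    Limits.IsZero
      (((Tor (ModuleCat (PowerSeries A)) 1).obj (ModuleCat.of (PowerSeries A) M)).obj
        (ModuleCat.of (PowerSeries A) (PowerSeries B))) := by
  classical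
  letI : Module (PowerSeries A) (PowerSeries B) :=
    Module.compHom (PowerSeries B) (PowerSeries.map f)
  obtain ⟨k, hk⟩ := hM
  obtain ⟨P, Q, g, π, hPfin, hPproj, hQfin, hQproj, hginj, hπsurj, hgexact⟩ := hres
  haveI : Module.Projective (PowerSeries A) ↑P := hPproj
  haveI : Module.Projective (PowerSeries A) ↑Q := hQproj
  haveI : Module.Flat (PowerSeries A) ↑Q := Module.Flat.of_projective
  -- `B[[t]]` has no `X^k`-torsion
  have hNtf : ∀ n : PowerSeries B, (PowerSeries.X ^ k : PowerSeries A) • n = 0 → n = 0 := by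
    intro n hn
    have h2 : (PowerSeries.X ^ k : PowerSeries A) • n
        = PowerSeries.map f (PowerSeries.X ^ k) * n := rfl
    rw [h2, map_pow, PowerSeries.map_X] at hn
    ext d
    have h3 := congrArg (PowerSeries.coeff (d + k)) hn
    rw [PowerSeries.coeff_X_pow_mul, map_zero] at h3
    simpa using h3
  have hA : Function.Injective
      (LinearMap.rTensor (PowerSeries B) g.hom) :=
    aux_injA g.hom π.hom hginj hgexact (PowerSeries.X ^ k) hk hNtf
  obtain ⟨Pres⟩ :=
    (inferInstance : HasProjectiveResolution
      (ModuleCat.of (PowerSeries A) (PowerSeries B))).out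
  set F : ModuleCat (PowerSeries A) ⥤ ModuleCat (PowerSeries A) :=
    (MonoidalCategory.tensoringLeft (ModuleCat (PowerSeries A))).obj
      (ModuleCat.of (PowerSeries A) M) with hF
  show Limits.IsZero
    ((F.leftDerived 1).obj (ModuleCat.of (PowerSeries A) (PowerSeries B)))
  refine Limits.IsZero.of_iso ?_ (Pres.isoLeftDerivedObj F 1)
  have hexactAt :
      ((F.mapHomologicalComplex (ComplexShape.down ℕ)).obj Pres.complex).ExactAt 1 := by
    rw [HomologicalComplex.exactAt_iff' _ 2 1 0 (by simp) (by simp)]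
    rw [ShortComplex.moduleCat_exact_iff]
    haveI : Module.Projective (PowerSeries A) ↑(Pres.complex.X 0) :=
      (IsProjective.iff_projective _).mpr (Pres.projective 0)
    haveI : Module.Flat (PowerSeries A) ↑(Pres.complex.X 0) := Module.Flat.of_projective
    set d10 : ↑(Pres.complex.X 1) →ₗ[PowerSeries A] ↑(Pres.complex.X 0) :=
      (Pres.complex.d 1 0).hom with hd10
    set d21 : ↑(Pres.complex.X 2) →ₗ[PowerSeries A] ↑(Pres.complex.X 1) :=
      (Pres.complex.d 2 1).hom with hd21
    set ρ : ↑(Pres.complex.X 0) →ₗ[PowerSeries A] PowerSeries B := (Pres.π.f 0).hom with hρ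
    have hρsurj : Function.Surjective ρ :=
      (ModuleCat.epi_iff_surjective (Pres.π.f 0)).mp inferInstance
    have hd10ρ : ∀ y : ↑(Pres.complex.X 1), ρ (d10 y) = 0 := by
      intro y
      have h0 := LinearMap.congr_fun (congrArg ModuleCat.Hom.hom Pres.complex_d_comp_π_f_zero) y
      rw [ModuleCat.hom_comp, LinearMap.comp_apply, ModuleCat.hom_zero, LinearMap.zero_apply] at h0
      exact h0
    have hexact0 := (ShortComplex.moduleCat_exact_iff _).mp Pres.exact₀
    set K := LinearMap.range d10 with hK
    have hιexact : Function.Exact (K.subtype) ρ := by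
      intro y
      constructor
      · intro hy
        obtain ⟨z, hz⟩ := hexact0 y hy
        exact ⟨⟨d10 z, ⟨z, rfl⟩⟩, hz⟩
      · rintro ⟨⟨w, hw⟩, rfl⟩
        obtain ⟨z, rfl⟩ := hw
        exact hd10ρ z
    set p := d10.rangeRestrict with hp
    have hpsurj : Function.Surjective p := d10.surjective_rangeRestrict
    have hpexact : Function.Exact d21 p := by
      intro y
      constructor
      · intro hy
        have hy' : d10 y = 0 := congrArg Subtype.val hy
        obtain ⟨z, hz⟩ :=
          (ShortComplex.moduleCat_exact_iff _).mp (Pres.exact_succ 0) y hy'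
        exact ⟨z, hz⟩
      · rintro ⟨z, rfl⟩
        have h1 : d10 (d21 z) = 0 := by
          have h0 := LinearMap.congr_fun (congrArg ModuleCat.Hom.hom (Pres.complex.d_comp_d 2 1 0)) z
          rw [ModuleCat.hom_comp, LinearMap.comp_apply, ModuleCat.hom_zero, LinearMap.zero_apply] at h0
          exact h0
        exact Subtype.ext h1
    have hB : Function.Injective ((K.subtype).lTensor M) :=
      aux_injB g.hom π.hom hgexact hπsurj K.subtype ρ (Submodule.injective_subtype K)
        hιexact hρsurj hA
    intro x hx
    have hx' : (d10.lTensor M) x = 0 := hx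
    have hsplit : d10 = K.subtype ∘ₗ p := by ext y; rfl
    have hp0 : (p.lTensor M) x = 0 := by
      apply hB
      rw [map_zero]
      have h := hx'
      rw [hsplit, LinearMap.lTensor_comp] at h
      exact h
    obtain ⟨v, hv⟩ := (lTensor_exact M hpexact hpsurj x).mp hp0
    exact ⟨v, hv⟩
  exact (HomologicalComplex.exactAt_iff_isZero_homology _ _).mp hexactAt
end
end

section
/- Let A → B be a homomorphism of commutative rings and let M be a module over the formal power series ring A[[t]] such that tᵏ·M = 0 for some integer k ≥ 0. Then the natural B-module homomorphism M ⊗_A B → M ⊗_{A[[t]]} B[[t]], m ⊗ b ↦ m ⊗ b (with b viewed as a constant power series), is an isomorphism; here M is regarded as an A-module via the inclusion of constants A → A[[t]], and B[[t]] is regarded as an A[[t]]-algebra via the coefficientwise homomorphism A[[t]] → B[[t]]. -/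
noncomputable section

open scoped TensorProduct

section Stmt17

variable (A B : Type) [CommRing A] [CommRing B] [Algebra A B]
variable (M : Type) [AddCommGroup M] [Module (PowerSeries A) M]
variable [Module A M] [IsScalarTower A (PowerSeries A) M]

/-- `B[[t]]` as a module over `A[[t]]` via the coefficientwise homomorphism
`A[[t]] → B[[t]]` induced by `A → B`. -/
def psModule : Module (PowerSeries A) (PowerSeries B) :=
  Module.compHom (PowerSeries B) (PowerSeries.map (algebraMap A B))

attribute [local instance] psModule

/-- The natural map `M ⊗_A B → M ⊗_{A[[t]]} B[[t]]`, `m ⊗ b ↦ m ⊗ b` (with `b` viewed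
as a constant power series). -/
def canonicalTensorMap : (M ⊗[A] B) →+ (M ⊗[PowerSeries A] PowerSeries B) := by
  refine TensorProduct.liftAddHom
    { toFun := fun m =>
        { toFun := fun b => m ⊗ₜ[PowerSeries A] ((@PowerSeries.C B _) b)
          map_zero' := by simp
          map_add' := by
            intro b b'
            simp [TensorProduct.tmul_add] }
      map_zero' := by
        ext b
        simp [TensorProduct.zero_tmul]
      map_add' := by
        intro m m'
        ext b
        simp [TensorProduct.add_tmul] } ?_
  intro a m b
  show (a • m) ⊗ₜ[PowerSeries A] (@PowerSeries.C B _ b) =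
    m ⊗ₜ[PowerSeries A] (@PowerSeries.C B _ (a • b))
  have h1 : a • m = (algebraMap A (PowerSeries A) a) • m := (algebraMap_smul _ a m).symm
  have h2 : (@PowerSeries.C B _) (a • b) =
      (algebraMap A (PowerSeries A) a) • (@PowerSeries.C B _ b) := by
    show (@PowerSeries.C B _) (a • b) =
      (PowerSeries.map (algebraMap A B)) (algebraMap A (PowerSeries A) a) * (@PowerSeries.C B _ b)
    rw [Algebra.smul_def]
    have : (PowerSeries.map (algebraMap A B)) (algebraMap A (PowerSeries A) a) =
        @PowerSeries.C B _ (algebraMap A B a) := by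
      have : (algebraMap A (PowerSeries A)) a = @PowerSeries.C A _ a := rfl
      rw [this, PowerSeries.map_C]
    rw [this, ← map_mul]
  rw [h1, h2, TensorProduct.smul_tmul]
  rfl

open PowerSeries Finset in
private lemma aux_smul_def (r : PowerSeries A) (g : PowerSeries B) :
    r • g = PowerSeries.map (algebraMap A B) r * g := rfl

open PowerSeries Finset in
private lemma aux_X_pow_dvd_sub_trunc {R : Type} [CommRing R] (g : PowerSeries R) (k : ℕ) :
    (PowerSeries.X : PowerSeries R) ^ k ∣
      g - ∑ i ∈ Finset.range k, PowerSeries.C (PowerSeries.coeff i g) * PowerSeries.X ^ i := by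
  rw [PowerSeries.X_pow_dvd_iff]
  intro j hj
  rw [map_sub, map_sum]
  rw [Finset.sum_eq_single j (fun i _ hij => by
        simp [PowerSeries.coeff_C_mul, PowerSeries.coeff_X_pow, Ne.symm hij])
      (fun h => absurd (Finset.mem_range.2 hj) h)]
  simp [PowerSeries.coeff_C_mul, PowerSeries.coeff_X_pow]

open Finset in
private lemma aux_triangle {P : Type*} [AddCommMonoid P] (k : ℕ) (F : ℕ → ℕ → P) :
    ∑ i ∈ Finset.range k, ∑ p ∈ Finset.HasAntidiagonal.antidiagonal i, F p.1 p.2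
      = ∑ l ∈ Finset.range k, ∑ j ∈ Finset.range (k - l), F j l := by
  rw [Finset.sum_sigma', Finset.sum_sigma']
  refine Finset.sum_nbij' (fun x => ⟨x.2.2, x.2.1⟩) (fun x => ⟨x.1 + x.2, x.2, x.1⟩)
    ?_ ?_ ?_ ?_ ?_
  · rintro ⟨i, j, l⟩ h
    simp only [Finset.mem_sigma, Finset.mem_range, Finset.HasAntidiagonal.mem_antidiagonal] at h ⊢
    omega
  · rintro ⟨l, j⟩ h
    simp only [Finset.mem_sigma, Finset.mem_range, Finset.HasAntidiagonal.mem_antidiagonal] at h ⊢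
    omega
  · rintro ⟨i, j, l⟩ h
    simp only [Finset.mem_sigma, Finset.mem_range, Finset.HasAntidiagonal.mem_antidiagonal] at h
    obtain ⟨h1, h2⟩ := h
    subst h2
    simp [Nat.add_comm l j]
  · rintro ⟨l, j⟩ _
    rfl
  · rintro ⟨i, j, l⟩ _
    rfl

open PowerSeries Finset in
private lemma aux_trunc_smul (k : ℕ)
    (hM : ∀ x : M, (PowerSeries.X ^ k : PowerSeries A) • x = 0)
    (r : PowerSeries A) (m : M) (l : ℕ) (hl : l ≤ k) :
    ((PowerSeries.X : PowerSeries A) ^ l * r) • m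
      = ∑ j ∈ Finset.range (k - l),
          ((PowerSeries.C (PowerSeries.coeff j r) * PowerSeries.X ^ (j + l)) • m) := by
  obtain ⟨g, hg⟩ := aux_X_pow_dvd_sub_trunc r (k - l)
  set T : PowerSeries A := ∑ i ∈ Finset.range (k - l),
      PowerSeries.C (PowerSeries.coeff i r) * PowerSeries.X ^ i with hT
  have hT2 : (X : PowerSeries A) ^ l * T
      = ∑ j ∈ Finset.range (k - l),
          PowerSeries.C (PowerSeries.coeff j r) * PowerSeries.X ^ (j + l) := by
    rw [hT, Finset.mul_sum]
    exact Finset.sum_congr rfl fun j _ => by rw [pow_add]; ring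
  have hXg : (X : PowerSeries A) ^ l * (X ^ (k - l) * g) = g * X ^ k := by
    rw [← mul_assoc, ← pow_add, Nat.add_sub_cancel' hl, mul_comm]
  calc ((X : PowerSeries A) ^ l * r) • m
      = ((∑ j ∈ Finset.range (k - l),
            PowerSeries.C (PowerSeries.coeff j r) * PowerSeries.X ^ (j + l))
          + g * X ^ k) • m := by
        congr 1
        rw [← hT2, ← hXg, ← mul_add]
        congr 1
        rw [← hg]; ring
    _ = _ := by
        rw [add_smul, mul_smul, hM, smul_zero, add_zero, Finset.sum_smul]

open PowerSeries Finset in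
/-- The inverse map `M ⊗_{A[[t]]} B[[t]] → M ⊗_A B`,
`m ⊗ g ↦ ∑_{i<k} (tⁱ·m) ⊗ gᵢ`. -/
private def invTensorMap (k : ℕ)
    (hM : ∀ x : M, (PowerSeries.X ^ k : PowerSeries A) • x = 0) :
    (M ⊗[PowerSeries A] PowerSeries B) →+ (M ⊗[A] B) := by
  refine TensorProduct.liftAddHom
    { toFun := fun m =>
        { toFun := fun g => ∑ i ∈ Finset.range k,
            ((PowerSeries.X ^ i : PowerSeries A) • m) ⊗ₜ[A] (PowerSeries.coeff i g)
          map_zero' := by simp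
          map_add' := by
            intro g g'
            simp [TensorProduct.tmul_add, Finset.sum_add_distrib] }
      map_zero' := by
        ext g
        simp
      map_add' := by
        intro m m'
        ext g
        simp [smul_add, TensorProduct.add_tmul, Finset.sum_add_distrib] } ?_
  intro r m g
  show ∑ i ∈ Finset.range k,
        ((PowerSeries.X ^ i : PowerSeries A) • (r • m)) ⊗ₜ[A] (PowerSeries.coeff i g)
      = ∑ i ∈ Finset.range k,
        ((PowerSeries.X ^ i : PowerSeries A) • m) ⊗ₜ[A] (PowerSeries.coeff i (r • g))
  have lhs_eq : ∑ i ∈ Finset.range k,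
        ((PowerSeries.X ^ i : PowerSeries A) • (r • m)) ⊗ₜ[A] (PowerSeries.coeff i g)
      = ∑ l ∈ Finset.range k, ∑ j ∈ Finset.range (k - l),
          ((PowerSeries.C (PowerSeries.coeff j r) * PowerSeries.X ^ (j + l)) • m)
            ⊗ₜ[A] (PowerSeries.coeff l g) := by
    refine Finset.sum_congr rfl fun l hl => ?_
    rw [← mul_smul, aux_trunc_smul A M k hM r m l (Nat.le_of_lt (Finset.mem_range.1 hl)),
      TensorProduct.sum_tmul]
  have rhs_eq : ∑ i ∈ Finset.range k,
        ((PowerSeries.X ^ i : PowerSeries A) • m) ⊗ₜ[A] (PowerSeries.coeff i (r • g))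
      = ∑ i ∈ Finset.range k, ∑ p ∈ Finset.HasAntidiagonal.antidiagonal i,
          ((PowerSeries.C (PowerSeries.coeff p.1 r) * PowerSeries.X ^ (p.1 + p.2)) • m)
            ⊗ₜ[A] (PowerSeries.coeff p.2 g) := by
    refine Finset.sum_congr rfl fun i hi => ?_
    rw [aux_smul_def, PowerSeries.coeff_mul, TensorProduct.tmul_sum]
    refine Finset.sum_congr rfl fun p hp => ?_
    have hpi : p.1 + p.2 = i := Finset.HasAntidiagonal.mem_antidiagonal.1 hp
    rw [PowerSeries.coeff_map]
    have h1 : (algebraMap A B) (PowerSeries.coeff p.1 r) * PowerSeries.coeff p.2 g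
        = (PowerSeries.coeff p.1 r) • (PowerSeries.coeff p.2 g) := by
      rw [Algebra.smul_def]
    rw [h1, hpi, ← TensorProduct.smul_tmul]
    congr 1
    rw [← smul_assoc, PowerSeries.smul_eq_C_mul]
  rw [lhs_eq, rhs_eq]
  exact (aux_triangle k (fun j l =>
    ((PowerSeries.C (PowerSeries.coeff j r) * PowerSeries.X ^ (j + l)) • m)
      ⊗ₜ[A] (PowerSeries.coeff l g))).symm

/-- Let `A → B` be a homomorphism of commutative rings and `M` an
`A[[t]]`-module with `tᵏ·M = 0` for some `k ≥ 0`. Then the natural map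
`M ⊗_A B → M ⊗_{A[[t]]} B[[t]]`, `m ⊗ b ↦ m ⊗ b`, is an isomorphism. -/
theorem statement17 (k : ℕ) (hM : ∀ x : M, (PowerSeries.X ^ k : PowerSeries A) • x = 0) :
    Function.Bijective (canonicalTensorMap A B M) := by
  have hcan : ∀ (m : M) (b : B),
      canonicalTensorMap A B M (m ⊗ₜ[A] b) = m ⊗ₜ[PowerSeries A] (PowerSeries.C b) := by
    intro m b
    rfl
  have hinv : ∀ (m : M) (g : PowerSeries B),
      invTensorMap A B M k hM (m ⊗ₜ[PowerSeries A] g)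
        = ∑ i ∈ Finset.range k,
            ((PowerSeries.X ^ i : PowerSeries A) • m) ⊗ₜ[A] (PowerSeries.coeff i g) := by
    intro m g
    rfl
  have hleft : Function.LeftInverse (invTensorMap A B M k hM) (canonicalTensorMap A B M) := by
    intro x
    induction x using TensorProduct.induction_on with
    | zero => simp
    | add x y hx hy => simp [hx, hy]
    | tmul m b =>
      rw [hcan, hinv]
      rcases Nat.eq_zero_or_pos k with hk | hk
      · subst hk
        have hm : m = 0 := by
          have := hM m
          rwa [pow_zero, one_smul] at this
        simp [hm]
      · rw [Finset.sum_eq_single 0 (fun i _ hi => by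
            simp [PowerSeries.coeff_C, hi])
          (fun h => absurd (Finset.mem_range.2 hk) h)]
        simp [PowerSeries.coeff_C]
  have hright : Function.RightInverse (invTensorMap A B M k hM) (canonicalTensorMap A B M) := by
    intro x
    induction x using TensorProduct.induction_on with
    | zero => simp
    | add x y hx hy => simp [hx, hy]
    | tmul m g =>
      rw [hinv, map_sum]
      have step : ∀ i : ℕ,
          canonicalTensorMap A B M
              (((PowerSeries.X ^ i : PowerSeries A) • m) ⊗ₜ[A] (PowerSeries.coeff i g))
            = m ⊗ₜ[PowerSeries A]
                (PowerSeries.C (PowerSeries.coeff i g) * PowerSeries.X ^ i) := by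
        intro i
        rw [hcan, TensorProduct.smul_tmul]
        congr 1
        erw [aux_smul_def]
        rw [map_pow, PowerSeries.map_X, mul_comm]
      calc ∑ i ∈ Finset.range k,
            canonicalTensorMap A B M
              (((PowerSeries.X ^ i : PowerSeries A) • m) ⊗ₜ[A] (PowerSeries.coeff i g))
          = m ⊗ₜ[PowerSeries A] (∑ i ∈ Finset.range k,
              PowerSeries.C (PowerSeries.coeff i g) * PowerSeries.X ^ i) := by
            rw [TensorProduct.tmul_sum]
            exact Finset.sum_congr rfl fun i _ => step i
        _ = m ⊗ₜ[PowerSeries A] g := by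
            obtain ⟨h, hh⟩ := aux_X_pow_dvd_sub_trunc g k
            have hg : g = (∑ i ∈ Finset.range k,
                PowerSeries.C (PowerSeries.coeff i g) * PowerSeries.X ^ i)
                + (PowerSeries.X : PowerSeries B) ^ k * h := by
              rw [← hh]; ring
            have hXk : (PowerSeries.X : PowerSeries B) ^ k * h
                = (PowerSeries.X ^ k : PowerSeries A) • h := by
              rw [aux_smul_def, map_pow, PowerSeries.map_X]
            conv_rhs => rw [hg]
            rw [TensorProduct.tmul_add, hXk]
            erw [← TensorProduct.smul_tmul]
            rw [hM,
              TensorProduct.zero_tmul, add_zero]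
  exact ⟨hleft.injective, hright.surjective⟩

end Stmt17
end
end
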